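/- arXiv:1012.3244 — 2 statements merged into one kernel-verified Lean document; each statement's English description precedes it below -/
import Mathlib

section
/- Let G ≅ ℤ^k ⊕ ℤ_{n_1} ⊕ … ⊕ ℤ_{n_t} with n_{i+1} ∣ n_i, presented as F/R as below, with R_i = ⟨x_{k+i}^{n_i}⟩, and let 1 ≤ c_2 ≤ c_1 ≤ 2c_2. Then [R, _{c_1}F, γ_{c_2+1}(F)] ≡ ∏_{i=1}^t [R_i, _{c_1}F, γ_{c_2+1}(F)] (mod H) and [R, _{c_2}F, γ_{c_1+1}(F)] ≡ ∏_{i=1}^t [R_i, _{c_2}F, γ_{c_1+1}(F)] (mod H), where ≡ (mod H) means the two subgroups have the same product with H. -/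
namespace PaperFormal

open Subgroup
open scoped commutatorElement

/-- The set of values of the words in `V` in the group `G`. -/
def wordValues {α : Type*} (V : Set (FreeGroup α)) (G : Type*) [Group G] : Set G :=
  {g | ∃ v ∈ V, ∃ f : α → G, FreeGroup.lift f v = g}

/-- The verbal subgroup `V(G)` of `G` with respect to a set of words `V`. -/
def verbal {α : Type*} (V : Set (FreeGroup α)) (G : Type*) [Group G] : Subgroup G :=
  Subgroup.closure (wordValues V G)

/-- The marginal set `V*(G)`: the set of `g ∈ G` such that replacing any single entry
`gᵢ` by `gᵢ * g` does not change the value of any word `v ∈ V`. -/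
def marginalSet {α : Type*} [DecidableEq α] (V : Set (FreeGroup α)) (G : Type*) [Group G] :
    Set G :=
  {g | ∀ v ∈ V, ∀ f : α → G, ∀ i : α,
    FreeGroup.lift (Function.update f i (f i * g)) v = FreeGroup.lift f v}

/-- The subgroup `[K V* G]`. -/
def KVstar {α : Type*} [DecidableEq α] (V : Set (FreeGroup α)) {G : Type*} [Group G]
    (K : Subgroup G) : Subgroup G :=
  Subgroup.closure {x | ∃ v ∈ V, ∃ f : α → G, ∃ i : α, ∃ r ∈ K,
    x = FreeGroup.lift (Function.update f i (f i * r)) v * (FreeGroup.lift f v)⁻¹}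

/-- The quotient group `A/B`, for subgroups `A B` of an ambient group (mathematically
meaningful when `B` is a subgroup of `A` normalized by `A`; we take the normal closure of
`B ∩ A` inside `A`, which equals `B` in that case). -/
abbrev quotBy {G : Type*} [Group G] (A B : Subgroup G) : Type _ :=
  ↥A ⧸ Subgroup.normalClosure ((B.subgroupOf A : Subgroup ↥A) : Set ↥A)

/-- The canonical projection onto `quotBy A B`. -/
def quotByMk {G : Type*} [Group G] {A : Subgroup G} (B : Subgroup G) (a : ↥A) :
    quotBy A B := QuotientGroup.mk a

/-- The natural homomorphism `A/B → A'/B'` when `A ≤ A'` and `B ≤ B'`. -/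
def quotByHom {G : Type*} [Group G] {A A' B B' : Subgroup G} (hA : A ≤ A') (hB : B ≤ B') :
    quotBy A B →* quotBy A' B' :=
  QuotientGroup.lift _ ((QuotientGroup.mk' _).comp (Subgroup.inclusion hA)) (by
    intro x hx
    have : x ∈ ((QuotientGroup.mk' (Subgroup.normalClosure
        ((B'.subgroupOf A' : Subgroup ↥A') : Set ↥A'))).comp (Subgroup.inclusion hA)).ker := by
      refine Subgroup.normalClosure_le_normal ?_ hx
      intro y hy
      simp only [SetLike.mem_coe, Subgroup.mem_subgroupOf] at hy
      simp only [SetLike.mem_coe, MonoidHom.mem_ker, MonoidHom.comp_apply,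
        QuotientGroup.mk'_apply]
      rw [QuotientGroup.eq_one_iff]
      refine Subgroup.subset_normalClosure ?_
      simp only [SetLike.mem_coe, Subgroup.mem_subgroupOf, Subgroup.coe_inclusion]
      exact hB hy
    exact this)

/-- The Baer invariant `𝔙M(G) = (R ∩ V(F))/[R V* F]` of `G ≅ F/R` with respect to the
set of words `V`. -/
abbrev BaerInv {α : Type*} [DecidableEq α] (V : Set (FreeGroup α)) {F : Type*} [Group F]
    (R : Subgroup F) : Type _ :=
  quotBy (R ⊓ verbal V F) (KVstar V R)

/-- The natural homomorphism `𝔙M(F/R) → 𝔙M(F/S)` for `R ≤ S`. -/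
def baerMap {α : Type*} [DecidableEq α] (V : Set (FreeGroup α)) {F : Type*} [Group F]
    {R S : Subgroup F} (h : R ≤ S) : BaerInv V R →* BaerInv V S :=
  quotByHom (inf_le_inf_right _ h) (Subgroup.closure_mono (by
    rintro x ⟨v, hv, f, i, r, hr, rfl⟩
    exact ⟨v, hv, f, i, r, h hr, rfl⟩))

/-- A group `G` is `V`-capable if `G ≅ E/V*(E)` for some group `E`; equivalently there
is a surjection `E → G` whose kernel is exactly the marginal subgroup `V*(E)`. -/
def VCapable {α : Type*} [DecidableEq α] (V : Set (FreeGroup α)) (G : Type*) [Group G] : Prop :=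
  ∃ (E : Type*) (_ : Group E) (φ : E →* G),
    Function.Surjective φ ∧ (φ.ker : Set E) = marginalSet V E

/-- A group `G` is capable if `G ≅ E/Z(E)` for some group `E`. -/
def Capable (G : Type*) [Group G] : Prop :=
  ∃ (E : Type*) (_ : Group E) (φ : E →* G),
    Function.Surjective φ ∧ φ.ker = Subgroup.center E

/-- A group `G` is `𝔑_c`-capable if `G ≅ E/Z_c(E)` for some group `E`. -/
def NCapable (c : ℕ) (G : Type*) [Group G] : Prop :=
  ∃ (E : Type*) (_ : Group E) (φ : E →* G),
    Function.Surjective φ ∧ φ.ker = _root_.upperCentralSeries E c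

/-- The nilpotency word `[…[[x₀,x₁],x₂],…,x_c]` defining the variety `𝔑_c`. -/
def nilpWord : ℕ → FreeGroup ℕ
  | 0 => FreeGroup.of 0
  | c + 1 => ⁅nilpWord c, FreeGroup.of (c + 1)⁆

/-- The outer commutator word `[[…[x₁,x₂],…,x_{c₁+1}], […[y₁,y₂],…,y_{c₂+1}]]`
(in `c₁+c₂+2` distinct variables) defining the variety `[𝔑_{c₁},𝔑_{c₂}]`. -/
def outerWord (c₁ c₂ : ℕ) : FreeGroup ℕ :=
  ⁅nilpWord c₁, FreeGroup.map (fun i => i + (c₁ + 1)) (nilpWord c₂)⁆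

/-- The solvability word `δ_ℓ` (on `2^ℓ` distinct variables) defining the variety `𝔖_ℓ`. -/
def deltaWord : ℕ → FreeGroup ℕ
  | 0 => FreeGroup.of 0
  | ℓ + 1 => ⁅deltaWord ℓ, FreeGroup.map (fun i => i + 2 ^ ℓ) (deltaWord ℓ)⁆

/-- `[R, F, F, …, F]` with `c` occurrences of `F`. -/
def iterBracket {G : Type*} [Group G] (R : Subgroup G) : ℕ → Subgroup G
  | 0 => R
  | c + 1 => ⁅iterBracket R c, (⊤ : Subgroup G)⁆

/-- Formal commutators on a set `X` of generators. -/
inductive FC (X : Type*) : Type _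
  | of : X → FC X
  | comm : FC X → FC X → FC X

namespace FC

/-- The weight of a formal commutator. -/
def wt {X : Type*} : FC X → ℕ
  | .of _ => 1
  | .comm a b => wt a + wt b

/-- The value of a formal commutator in the free group on `X`. -/
def val {X : Type*} : FC X → FreeGroup X
  | .of x => FreeGroup.of x
  | .comm a b => ⁅val a, val b⁆

/-- Whether the generator `x` occurs in a formal commutator. -/
def occurs {X : Type*} (x : X) : FC X → Prop
  | .of y => x = y
  | .comm a b => occurs x a ∨ occurs x b

/-- The standard ordering of (basic) commutators: first by weight, commutators of the
same weight being compared lexicographically in their two components. -/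
def cmp {X : Type*} [LinearOrder X] : FC X → FC X → Ordering
  | .of x, .of y => compare x y
  | .of x, .comm a b => (compare (wt (FC.of x)) (wt (FC.comm a b))).then .lt
  | .comm a b, .of y => (compare (wt (FC.comm a b)) (wt (FC.of y))).then .gt
  | .comm a b, .comm c d =>
      (compare (wt (FC.comm a b)) (wt (FC.comm c d))).then ((cmp a c).then (cmp b d))

/-- Basic commutators on a totally ordered set `X`: elements of `X` are basic of weight
one; `[cᵢ,cⱼ]` is basic provided `cᵢ, cⱼ` are basic, `cᵢ > cⱼ`, and if `cᵢ = [c_s,c_t]`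
then `cⱼ ≥ c_t`. -/
inductive IsBasic {X : Type*} [LinearOrder X] : FC X → Prop
  | of (x : X) : IsBasic (.of x)
  | comm {ci cj : FC X} : IsBasic ci → IsBasic cj → cmp cj ci = .lt →
      (∀ cs ct : FC X, ci = .comm cs ct → cmp cj ct ≠ .lt) → IsBasic (.comm ci cj)

end FC

/-- `Q` is a free abelian group with basis the subset `s ⊆ Q`. -/
def IsFreeAbelianWithBasis (Q : Type*) [Group Q] (s : Set Q) : Prop :=
  ∃ e : Q ≃* Multiplicative (FreeAbelianGroup s),
    ∀ (q : Q) (h : q ∈ s), e q = Multiplicative.ofAdd (FreeAbelianGroup.of (⟨q, h⟩ : s))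

/-- The Witt function `χ_n(d) = (1/n) ∑_{m ∣ n} μ(m) d^{n/m}`. -/
def chi (n d : ℕ) : ℕ :=
  ((∑ m ∈ n.divisors, (ArithmeticFunction.moebius m) * (d : ℤ) ^ (n / m)) / (n : ℤ)).toNat


/-! Setup for the free presentation of `G ≅ ℤ^k ⊕ ℤ_{n 0} ⊕ ⋯ ⊕ ℤ_{n (t-1)}`:
`F` is the free group on `x_0, …, x_{k+t-1}` and `R` is the (normal) subgroup of `F`
generated by `γ₂(F)` together with the elements `x_{k+i} ^ (n i)`. -/

/-- The index of the generator `x_{k+i}`. -/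
def xIdx (k t : ℕ) (i : Fin t) : Fin (k + t) := ⟨k + i, Nat.add_lt_add_left i.isLt k⟩

/-- The generator `x_{k+i}` of the free group `F`. -/
def xGen (k t : ℕ) (i : Fin t) : FreeGroup (Fin (k + t)) := FreeGroup.of (xIdx k t i)

/-- The subgroup `R` of `F`, generated by `γ₂(F)` and the `x_{k+i} ^ (n i)`; it is
automatically normal since it contains the commutator subgroup. -/
def Rsub (k t : ℕ) (n : Fin t → ℕ) : Subgroup (FreeGroup (Fin (k + t))) :=
  Subgroup.lowerCentralSeries (⊤ : Subgroup (FreeGroup (Fin (k + t)))) 1 ⊔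
    Subgroup.closure {g | ∃ i : Fin t, g = xGen k t i ^ n i}

/-- The cyclic subgroup `R_i = ⟨x_{k+i} ^ (n i)⟩`. -/
def Rcyc (k t : ℕ) (n : Fin t → ℕ) (i : Fin t) : Subgroup (FreeGroup (Fin (k + t))) :=
  Subgroup.closure {xGen k t i ^ n i}

/-- The subgroup `[γ_{c₁+1}(F), γ_{c₂+1}(F)]` (note `γ_{c+1}(F)` is
`lowerCentralSeries F c` in Mathlib's indexing). -/
def gammaComm (k t c₁ c₂ : ℕ) : Subgroup (FreeGroup (Fin (k + t))) :=
  ⁅Subgroup.lowerCentralSeries (⊤ : Subgroup (FreeGroup (Fin (k + t)))) c₁,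
   Subgroup.lowerCentralSeries (⊤ : Subgroup (FreeGroup (Fin (k + t)))) c₂⁆

/-- The product `[R, _{c₁}F, γ_{c₂+1}(F)]·[R, _{c₂}F, γ_{c₁+1}(F)]` (a product of two
normal subgroups, hence equal to their join). -/
def Psub (k t : ℕ) (n : Fin t → ℕ) (c₁ c₂ : ℕ) : Subgroup (FreeGroup (Fin (k + t))) :=
  ⁅iterBracket (Rsub k t n) c₁, Subgroup.lowerCentralSeries (⊤ : Subgroup (FreeGroup (Fin (k + t)))) c₂⁆ ⊔
  ⁅iterBracket (Rsub k t n) c₂, Subgroup.lowerCentralSeries (⊤ : Subgroup (FreeGroup (Fin (k + t)))) c₁⁆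

/-- `H = ([R, _{c₁}F, γ_{c₂+1}(F)]·[R, _{c₂}F, γ_{c₁+1}(F)]) ∩ γ_{c₁+c₂+3}(F)`. -/
def Hsub (k t : ℕ) (n : Fin t → ℕ) (c₁ c₂ : ℕ) : Subgroup (FreeGroup (Fin (k + t))) :=
  Psub k t n c₁ c₂ ⊓ Subgroup.lowerCentralSeries (⊤ : Subgroup (FreeGroup (Fin (k + t)))) (c₁ + c₂ + 2)

/-- The set `A` of commutators `[β,α]` of basic commutators `β > α` of weights
`c₁+1` and `c₂+1` respectively. -/
def Aset (k t c₁ c₂ : ℕ) : Set (FreeGroup (Fin (k + t))) :=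
  {g | ∃ β α : FC (Fin (k + t)), β.IsBasic ∧ α.IsBasic ∧ β.wt = c₁ + 1 ∧ α.wt = c₂ + 1 ∧
    FC.cmp α β = .lt ∧ g = ⁅β.val, α.val⁆}

section Auxiliary

variable {G : Type*} [Group G]

/-- `⁅H, ⊤⁆` is always normal. -/
lemma commTop_normal (H : Subgroup G) : (⁅H, (⊤ : Subgroup G)⁆).Normal := by
  constructor
  intro x hx g
  rw [Subgroup.commutator_def] at hx
  induction hx using Subgroup.closure_induction with
  | mem y hy =>
    obtain ⟨p, hp, q, -, rfl⟩ := hy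
    have hid : g * ⁅p, q⁆ * g⁻¹ = ⁅p, g⁆⁻¹ * ⁅p, g * q⁆ := by group
    rw [hid]
    exact mul_mem (inv_mem (Subgroup.commutator_mem_commutator hp (Subgroup.mem_top g)))
      (Subgroup.commutator_mem_commutator hp (Subgroup.mem_top (g * q)))
  | one => simpa using one_mem _
  | mul x y hx hy ihx ihy =>
    have hid : g * (x * y) * g⁻¹ = (g * x * g⁻¹) * (g * y * g⁻¹) := by group
    rw [hid]; exact mul_mem ihx ihy
  | inv x hx ih =>
    have hid : g * x⁻¹ * g⁻¹ = (g * x * g⁻¹)⁻¹ := by group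
    rw [hid]; exact inv_mem ih

/-- A supremum of normal subgroups is normal. -/
lemma iSup_normal {ι : Sort*} (P : ι → Subgroup G) (h : ∀ i, (P i).Normal) :
    (⨆ i, P i).Normal := by
  constructor
  intro x hx g
  refine Subgroup.iSup_induction (C := fun y => g * y * g⁻¹ ∈ ⨆ i, P i) P hx
    (fun i y hy => Subgroup.mem_iSup_of_mem i ((h i).conj_mem y hy g)) (by simpa using one_mem _)
    (fun a b ha hb => ?_)
  show g * (a * b) * g⁻¹ ∈ ⨆ i, P i
  have hid : g * (a * b) * g⁻¹ = (g * a * g⁻¹) * (g * b * g⁻¹) := by group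
  rw [hid]; exact mul_mem ha hb

/-- Commutators distribute over a join `N ⊔ ⨆ᵢ Aᵢ` in the first argument, provided the
target join of commutators is normal. -/
lemma commutator_sup_iSup {ι : Sort*} (N L : Subgroup G) (A : ι → Subgroup G)
    (hM : (⁅N, L⁆ ⊔ ⨆ i, ⁅A i, L⁆).Normal) :
    ⁅N ⊔ ⨆ i, A i, L⁆ = ⁅N, L⁆ ⊔ ⨆ i, ⁅A i, L⁆ := by
  apply le_antisymm
  · rw [Subgroup.commutator_le]
    intro x hx l hl
    have hx' : x ∈ Subgroup.closure ((N : Set G) ∪ ⋃ i, (A i : Set G)) := by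
      rw [Subgroup.closure_union, Subgroup.closure_iUnion]
      simpa only [Subgroup.closure_eq] using hx
    clear hx
    induction hx' using Subgroup.closure_induction with
    | mem y hy =>
      rcases hy with hy | hy
      · exact Subgroup.mem_sup_left (Subgroup.commutator_mem_commutator hy hl)
      · obtain ⟨s, ⟨i, rfl⟩, hyi⟩ := hy
        exact Subgroup.mem_sup_right
          (Subgroup.mem_iSup_of_mem i (Subgroup.commutator_mem_commutator hyi hl))
    | one => simpa using one_mem _
    | mul x y hx hy ihx ihy =>
      have hid : ⁅x * y, l⁆ = x * ⁅y, l⁆ * x⁻¹ * ⁅x, l⁆ := by group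
      rw [hid]; exact mul_mem (hM.conj_mem _ ihy x) ihx
    | inv x hx ih =>
      have hid : ⁅x⁻¹, l⁆ = x⁻¹ * ⁅x, l⁆⁻¹ * (x⁻¹)⁻¹ := by group
      rw [hid]; exact hM.conj_mem _ (inv_mem ih) x⁻¹
  · refine sup_le (Subgroup.commutator_mono le_sup_left le_rfl)
      (iSup_le fun i => Subgroup.commutator_mono ((le_iSup A i).trans le_sup_right) le_rfl)

lemma iterBracket_mono {R S : Subgroup G} (h : R ≤ S) :
    ∀ c, iterBracket R c ≤ iterBracket S c
  | 0 => h
  | c + 1 => Subgroup.commutator_mono (iterBracket_mono h c) le_rfl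

lemma iterBracket_succ_normal (R : Subgroup G) (c : ℕ) : (iterBracket R (c + 1)).Normal :=
  commTop_normal _

lemma iterBracket_lcs : ∀ c : ℕ,
    iterBracket (Subgroup.lowerCentralSeries (⊤ : Subgroup G) 1) c = Subgroup.lowerCentralSeries (⊤ : Subgroup G) (c + 1)
  | 0 => rfl
  | c + 1 => by
    show ⁅iterBracket (Subgroup.lowerCentralSeries (⊤ : Subgroup G) 1) c, ⊤⁆ = _
    rw [iterBracket_lcs c]; rfl

lemma iterBracket_sup_iSup {ι : Sort*} (N : Subgroup G) (A : ι → Subgroup G) :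
    ∀ c : ℕ, iterBracket (N ⊔ ⨆ i, A i) c = iterBracket N c ⊔ ⨆ i, iterBracket (A i) c
  | 0 => rfl
  | c + 1 => by
    show ⁅iterBracket (N ⊔ ⨆ i, A i) c, ⊤⁆ = _
    rw [iterBracket_sup_iSup N A c]
    haveI h1 := commTop_normal (iterBracket N c)
    haveI h2 := iSup_normal _ fun i => commTop_normal (iterBracket (A i) c)
    exact commutator_sup_iSup _ _ _ inferInstance

/-- The three subgroups lemma. -/
lemma three_subgroups (A B C N : Subgroup G) [hN : N.Normal]
    (h1 : ⁅⁅B, C⁆, A⁆ ≤ N) (h2 : ⁅⁅C, A⁆, B⁆ ≤ N) : ⁅⁅A, B⁆, C⁆ ≤ N := by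
  have key : ∀ X Y Z : Subgroup G, ⁅⁅X, Y⁆, Z⁆ ≤ N ↔
      ⁅⁅X.map (QuotientGroup.mk' N), Y.map (QuotientGroup.mk' N)⁆,
        Z.map (QuotientGroup.mk' N)⁆ = ⊥ := by
    intro X Y Z
    rw [← Subgroup.map_commutator, ← Subgroup.map_commutator, eq_bot_iff,
      Subgroup.map_le_iff_le_comap, MonoidHom.comap_bot, QuotientGroup.ker_mk']
  rw [key]
  exact Subgroup.commutator_commutator_eq_bot_of_rotate ((key B C A).mp h1) ((key C A B).mp h2)

lemma lcs_comm_le : ∀ (n m : ℕ),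
    ⁅Subgroup.lowerCentralSeries (⊤ : Subgroup G) m, Subgroup.lowerCentralSeries (⊤ : Subgroup G) n⁆ ≤ Subgroup.lowerCentralSeries (⊤ : Subgroup G) (m + n + 1)
  | 0, m => le_of_eq rfl
  | n + 1, m => by
    have hsucc : Subgroup.lowerCentralSeries (⊤ : Subgroup G) (n + 1) = ⁅Subgroup.lowerCentralSeries (⊤ : Subgroup G) n, (⊤ : Subgroup G)⁆ := rfl
    rw [hsucc, Subgroup.commutator_comm]
    refine three_subgroups _ _ _ _ ?_ ?_
    · have h : ⁅Subgroup.lowerCentralSeries (⊤ : Subgroup G) (m + 1), Subgroup.lowerCentralSeries (⊤ : Subgroup G) n⁆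
          ≤ Subgroup.lowerCentralSeries (⊤ : Subgroup G) (m + 1 + n + 1) := lcs_comm_le n (m + 1)
      rw [show m + 1 + n + 1 = m + (n + 1) + 1 by omega] at h
      refine le_trans (Subgroup.commutator_mono (le_of_eq ?_) le_rfl) h
      rw [Subgroup.commutator_comm]; rfl
    · calc ⁅⁅Subgroup.lowerCentralSeries (⊤ : Subgroup G) m, Subgroup.lowerCentralSeries (⊤ : Subgroup G) n⁆, (⊤ : Subgroup G)⁆
          ≤ ⁅Subgroup.lowerCentralSeries (⊤ : Subgroup G) (m + n + 1), (⊤ : Subgroup G)⁆ :=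
            Subgroup.commutator_mono (lcs_comm_le n m) le_rfl
        _ = Subgroup.lowerCentralSeries (⊤ : Subgroup G) (m + (n + 1) + 1) := rfl

end Auxiliary

lemma Rsub_eq (k t : ℕ) (n : Fin t → ℕ) :
    Rsub k t n = Subgroup.lowerCentralSeries (⊤ : Subgroup (FreeGroup (Fin (k + t)))) 1 ⊔ ⨆ i, Rcyc k t n i := by
  unfold Rsub Rcyc
  congr 1
  rw [show {g | ∃ i : Fin t, g = xGen k t i ^ n i} = ⋃ i, ({xGen k t i ^ n i} :
      Set (FreeGroup (Fin (k + t)))) from by ext g; simp [Set.mem_iUnion, eq_comm],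
    Subgroup.closure_iUnion]

lemma comm_iter_eq (k t : ℕ) (n : Fin t → ℕ) (c d : ℕ) (hc : 1 ≤ c) :
    ⁅iterBracket (Rsub k t n) c, Subgroup.lowerCentralSeries (⊤ : Subgroup (FreeGroup (Fin (k + t)))) d⁆
      = ⁅Subgroup.lowerCentralSeries (⊤ : Subgroup (FreeGroup (Fin (k + t)))) (c + 1),
          Subgroup.lowerCentralSeries (⊤ : Subgroup (FreeGroup (Fin (k + t)))) d⁆
        ⊔ ⨆ i, ⁅iterBracket (Rcyc k t n i) c,
            Subgroup.lowerCentralSeries (⊤ : Subgroup (FreeGroup (Fin (k + t)))) d⁆ := by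
  obtain ⟨c, rfl⟩ : ∃ c', c = c' + 1 := ⟨c - 1, (Nat.succ_pred_eq_of_pos hc).symm⟩
  rw [Rsub_eq, iterBracket_sup_iSup, iterBracket_lcs]
  haveI h1 : (⁅Subgroup.lowerCentralSeries (⊤ : Subgroup (FreeGroup (Fin (k + t)))) (c + 1 + 1),
      Subgroup.lowerCentralSeries (⊤ : Subgroup (FreeGroup (Fin (k + t)))) d⁆).Normal := Subgroup.commutator_normal _ _
  haveI h2 : (⨆ i, ⁅iterBracket (Rcyc k t n i) (c + 1),
      Subgroup.lowerCentralSeries (⊤ : Subgroup (FreeGroup (Fin (k + t)))) d⁆).Normal :=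
    iSup_normal _ fun i => by
      haveI := iterBracket_succ_normal (Rcyc k t n i) c
      exact Subgroup.commutator_normal _ _
  exact commutator_sup_iSup _ _ _ inferInstance

lemma lcs_one_le_Rsub (k t : ℕ) (n : Fin t → ℕ) :
    Subgroup.lowerCentralSeries (⊤ : Subgroup (FreeGroup (Fin (k + t)))) 1 ≤ Rsub k t n := le_sup_left

lemma sup_cancel_of_le {G : Type*} [Group G] {Γ S H : Subgroup G} (h : Γ ≤ H) :
    (Γ ⊔ S) ⊔ H = S ⊔ H := by
  apply le_antisymm
  · exact sup_le (sup_le (h.trans le_sup_right) le_sup_left) le_sup_right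
  · exact sup_le ((le_sup_right : S ≤ Γ ⊔ S).trans le_sup_left) le_sup_right


/-- With `F/R` the given free presentation and `R_i = ⟨x_{k+i}^{n i}⟩`,
for `1 ≤ c₂ ≤ c₁ ≤ 2c₂` we have
`[R, _{c₁}F, γ_{c₂+1}(F)] ≡ ∏ᵢ [Rᵢ, _{c₁}F, γ_{c₂+1}(F)] (mod H)` and
`[R, _{c₂}F, γ_{c₁+1}(F)] ≡ ∏ᵢ [Rᵢ, _{c₂}F, γ_{c₁+1}(F)] (mod H)`,
i.e. in each case the two subgroups have the same product with `H`. -/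
theorem statement_3 (k t : ℕ) (n : Fin t → ℕ) (hn : ∀ i, 0 < n i)
    (hdvd : ∀ (i : Fin t) (h : (i : ℕ) + 1 < t), n ⟨(i : ℕ) + 1, h⟩ ∣ n i)
    (c₁ c₂ : ℕ) (hc₂ : 1 ≤ c₂) (hc₁ : c₂ ≤ c₁) (hc : c₁ ≤ 2 * c₂) :
    (⁅iterBracket (Rsub k t n) c₁, Subgroup.lowerCentralSeries (⊤ : Subgroup (FreeGroup (Fin (k + t)))) c₂⁆
        ⊔ Hsub k t n c₁ c₂
      = (⨆ i : Fin t,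
          ⁅iterBracket (Rcyc k t n i) c₁, Subgroup.lowerCentralSeries (⊤ : Subgroup (FreeGroup (Fin (k + t)))) c₂⁆)
        ⊔ Hsub k t n c₁ c₂) ∧
    (⁅iterBracket (Rsub k t n) c₂, Subgroup.lowerCentralSeries (⊤ : Subgroup (FreeGroup (Fin (k + t)))) c₁⁆
        ⊔ Hsub k t n c₁ c₂
      = (⨆ i : Fin t,
          ⁅iterBracket (Rcyc k t n i) c₂, Subgroup.lowerCentralSeries (⊤ : Subgroup (FreeGroup (Fin (k + t)))) c₁⁆)
        ⊔ Hsub k t n c₁ c₂) := by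
  have hlcsR : ∀ c : ℕ, Subgroup.lowerCentralSeries (⊤ : Subgroup (FreeGroup (Fin (k + t)))) (c + 1)
      ≤ iterBracket (Rsub k t n) c := by
    intro c
    rw [← iterBracket_lcs]
    exact iterBracket_mono (lcs_one_le_Rsub k t n) c
  constructor
  · rw [comm_iter_eq k t n c₁ c₂ (hc₂.trans hc₁)]
    refine sup_cancel_of_le ?_
    unfold Hsub Psub
    refine le_inf ((Subgroup.commutator_mono (hlcsR c₁) le_rfl).trans le_sup_left) ?_
    have h := lcs_comm_le c₂ (c₁ + 1) (G := FreeGroup (Fin (k + t)))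
    rwa [show c₁ + 1 + c₂ + 1 = c₁ + c₂ + 2 by omega] at h
  · rw [comm_iter_eq k t n c₂ c₁ hc₂]
    refine sup_cancel_of_le ?_
    unfold Hsub Psub
    refine le_inf ((Subgroup.commutator_mono (hlcsR c₂) le_rfl).trans le_sup_right) ?_
    have h := lcs_comm_le c₁ (c₂ + 1) (G := FreeGroup (Fin (k + t)))
    rwa [show c₂ + 1 + c₁ + 1 = c₁ + c₂ + 2 by omega] at h

end PaperFormal
end

section
/- Let u and w be words in disjoint sets of variables, let v = [u,w], and let K be a normal subgroup of a group G. Then [K v* G] = [[K u* G], w(G)]·[u(G), [K w* G]], where u(G) and w(G) are the verbal subgroups of G with respect to u and w. -/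
namespace PaperFormal

open Subgroup
open scoped commutatorElement

section Statement18Aux

variable {γ δ : Type*} {G : Type*} [Group G]

private lemma st18_lift_map (g : γ → δ) (f : δ → G) (x : FreeGroup γ) :
    FreeGroup.lift f (FreeGroup.map g x) = FreeGroup.lift (f ∘ g) x := by
  have := FreeGroup.ext_hom ((FreeGroup.lift f).comp (FreeGroup.map g))
    (FreeGroup.lift (f ∘ g)) (by simp)
  exact DFunLike.congr_fun this x

private lemma st18_lift_conj (f : γ → G) (g : G) (x : FreeGroup γ) :
    FreeGroup.lift (fun a => g * f a * g⁻¹) x = g * FreeGroup.lift f x * g⁻¹ := by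
  have := FreeGroup.ext_hom ((MulAut.conj g).toMonoidHom.comp (FreeGroup.lift f))
    (FreeGroup.lift (fun a => g * f a * g⁻¹)) (by simp)
  simpa using (DFunLike.congr_fun this x).symm

private lemma st18_closure_normal_of_conj {S : Set G}
    (h : ∀ g : G, ∀ x ∈ S, g * x * g⁻¹ ∈ S) : (closure S).Normal := by
  constructor
  intro n hn g
  induction hn using Subgroup.closure_induction with
  | mem x hx => exact subset_closure (h g x hx)
  | one => simpa using one_mem _
  | mul x y _ _ hx hy =>
      have e : g * (x * y) * g⁻¹ = (g * x * g⁻¹) * (g * y * g⁻¹) := by group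
      rw [e]; exact mul_mem hx hy
  | inv x _ hx =>
      have e : g * x⁻¹ * g⁻¹ = (g * x * g⁻¹)⁻¹ := by group
      rw [e]; exact inv_mem hx

private lemma st18_commutator_closure_le {S T : Set G} {N : Subgroup G} [hN : N.Normal]
    (h : ∀ x ∈ S, ∀ y ∈ T, ⁅x, y⁆ ∈ N) : ⁅closure S, closure T⁆ ≤ N := by
  rw [Subgroup.commutator_le]
  intro x hx
  induction hx using Subgroup.closure_induction with
  | mem x hxS =>
      intro y hy
      induction hy using Subgroup.closure_induction with
      | mem y hyT => exact h x hxS y hyT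
      | one => simpa using one_mem N
      | mul y z _ _ ihy ihz =>
          have e : ⁅x, y * z⁆ = ⁅x, y⁆ * (y * ⁅x, z⁆ * y⁻¹) := by
            simp only [commutatorElement_def]; group
          rw [e]; exact mul_mem ihy (hN.conj_mem _ ihz y)
      | inv y _ ihy =>
          have e : ⁅x, y⁻¹⁆ = y⁻¹ * ⁅x, y⁆⁻¹ * (y⁻¹)⁻¹ := by
            simp only [commutatorElement_def]; group
          rw [e]; exact hN.conj_mem _ (inv_mem ihy) _
  | one => intro y hy; simpa using one_mem N
  | mul a b _ _ iha ihb =>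
      intro y hy
      have e : ⁅a * b, y⁆ = a * ⁅b, y⁆ * a⁻¹ * ⁅a, y⁆ := by
        simp only [commutatorElement_def]; group
      rw [e]; exact mul_mem (hN.conj_mem _ (ihb y hy) a) (iha y hy)
  | inv a _ iha =>
      intro y hy
      have e : ⁅a⁻¹, y⁆ = a⁻¹ * ⁅a, y⁆⁻¹ * (a⁻¹)⁻¹ := by
        simp only [commutatorElement_def]; group
      rw [e]; exact hN.conj_mem _ (inv_mem (iha y hy)) _

private lemma st18_verbal_normal (V : Set (FreeGroup γ)) : (verbal V G).Normal := by
  apply st18_closure_normal_of_conj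
  rintro g x ⟨v, hv, f, rfl⟩
  exact ⟨v, hv, fun a => g * f a * g⁻¹, st18_lift_conj f g v⟩

private lemma st18_KVstar_normal [DecidableEq γ] (V : Set (FreeGroup γ)) (K : Subgroup G)
    [hK : K.Normal] : (KVstar V K).Normal := by
  apply st18_closure_normal_of_conj
  rintro g x ⟨v, hv, f, i, r, hr, rfl⟩
  refine ⟨v, hv, fun a => g * f a * g⁻¹, i, g * r * g⁻¹, hK.conj_mem r hr g, ?_⟩
  have hupd : Function.update (fun a => g * f a * g⁻¹) i
      ((fun a => g * f a * g⁻¹) i * (g * r * g⁻¹))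
      = fun a => g * (Function.update f i (f i * r)) a * g⁻¹ := by
    funext a
    by_cases ha : a = i
    · subst ha; simp [Function.update_self, mul_assoc]
    · simp [Function.update_of_ne ha]
  rw [hupd, st18_lift_conj, st18_lift_conj]
  group

end Statement18Aux

/-- Let `u` and `w` be words in disjoint sets of variables (realized
here over the two summands of `α ⊕ β`), let `v = [u,w]`, and let `K` be a normal
subgroup of a group `G`. Then `[K v* G] = [[K u* G], w(G)]·[u(G), [K w* G]]` (a product
of two normal subgroups, hence equal to their join). -/
theorem statement_18 {α β : Type*} [DecidableEq α] [DecidableEq β]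
    (u : FreeGroup α) (w : FreeGroup β) (G : Type*) [Group G]
    (K : Subgroup G) [K.Normal] :
    KVstar {(⁅FreeGroup.map (Sum.inl : α → α ⊕ β) u,
             FreeGroup.map (Sum.inr : β → α ⊕ β) w⁆ : FreeGroup (α ⊕ β))} K
      = ⁅KVstar {u} K, verbal {w} G⁆ ⊔ ⁅verbal {u} G, KVstar {w} K⁆ := by
  classical
  set v : FreeGroup (α ⊕ β) :=
    ⁅FreeGroup.map (Sum.inl : α → α ⊕ β) u, FreeGroup.map (Sum.inr : β → α ⊕ β) w⁆ with hv
  have evalv : ∀ F : α ⊕ β → G,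
      FreeGroup.lift F v = ⁅FreeGroup.lift (F ∘ Sum.inl) u, FreeGroup.lift (F ∘ Sum.inr) w⁆ := by
    intro F
    rw [hv, map_commutatorElement, st18_lift_map, st18_lift_map]
  haveI hNu : (verbal {u} G).Normal := st18_verbal_normal _
  haveI hNw : (verbal {w} G).Normal := st18_verbal_normal _
  haveI hKu : (KVstar {u} K).Normal := st18_KVstar_normal _ _
  haveI hKw : (KVstar {w} K).Normal := st18_KVstar_normal _ _
  haveI hL : (KVstar {v} K).Normal := st18_KVstar_normal _ _
  apply le_antisymm
  · -- ≤ direction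
    refine (Subgroup.closure_le _).2 ?_
    rintro x ⟨v', hv', F, i, r, hr, rfl⟩
    rw [Set.mem_singleton_iff] at hv'
    subst hv'
    rcases i with a | b
    · -- update in the u-variables
      have h1 : Function.update F (Sum.inl a) (F (Sum.inl a) * r) ∘ Sum.inl
          = Function.update (F ∘ Sum.inl) a (F (Sum.inl a) * r) :=
        Function.update_comp_eq_of_injective _ Sum.inl_injective _ _
      have h2 : Function.update F (Sum.inl a) (F (Sum.inl a) * r) ∘ Sum.inr = F ∘ Sum.inr :=
        Function.update_comp_eq_of_forall_ne _ _ (fun x => Sum.inr_ne_inl)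
      set f := F ∘ Sum.inl with hf
      set h := F ∘ Sum.inr with hh
      set A := FreeGroup.lift f u with hA
      set A' := FreeGroup.lift (Function.update f a (f a * r)) u with hA'
      set B := FreeGroup.lift h w with hB
      have key : ⁅A', B⁆ * ⁅A, B⁆⁻¹ = ⁅A' * A⁻¹, A * B * A⁻¹⁆ := by
        simp only [commutatorElement_def]; group
      have hFa : F (Sum.inl a) = f a := rfl
      rw [evalv, evalv, h1, h2, hFa, ← hf, ← hh, ← hA, ← hA', ← hB, key]
      have hs : A' * A⁻¹ ∈ KVstar {u} K :=
        subset_closure ⟨u, rfl, f, a, r, hr, rfl⟩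
      have hBmem : A * B * A⁻¹ ∈ verbal {w} G :=
        subset_closure ⟨w, rfl, fun b => A * h b * A⁻¹, st18_lift_conj h A w⟩
      exact (le_sup_left : ⁅KVstar {u} K, verbal {w} G⁆ ≤ _)
        (Subgroup.commutator_mem_commutator hs hBmem)
    · -- update in the w-variables
      have h1 : Function.update F (Sum.inr b) (F (Sum.inr b) * r) ∘ Sum.inl = F ∘ Sum.inl :=
        Function.update_comp_eq_of_forall_ne _ _ (fun x => Sum.inl_ne_inr)
      have h2 : Function.update F (Sum.inr b) (F (Sum.inr b) * r) ∘ Sum.inr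
          = Function.update (F ∘ Sum.inr) b (F (Sum.inr b) * r) :=
        Function.update_comp_eq_of_injective _ Sum.inr_injective _ _
      set f := F ∘ Sum.inl with hf
      set h := F ∘ Sum.inr with hh
      set A := FreeGroup.lift f u with hA
      set B := FreeGroup.lift h w with hB
      set B' := FreeGroup.lift (Function.update h b (h b * r)) w with hB'
      have key : ⁅A, B'⁆ * ⁅A, B⁆⁻¹ = A * ⁅B' * B⁻¹, B * A⁻¹ * B⁻¹⁆ * A⁻¹ := by
        simp only [commutatorElement_def]; group
      have hFb : F (Sum.inr b) = h b := rfl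
      rw [evalv, evalv, h1, h2, hFb, ← hf, ← hh, ← hA, ← hB, ← hB', key]
      have ht : B' * B⁻¹ ∈ KVstar {w} K :=
        subset_closure ⟨w, rfl, h, b, r, hr, rfl⟩
      have hAmem : B * A⁻¹ * B⁻¹ ∈ verbal {u} G := by
        have : B * A * B⁻¹ ∈ verbal {u} G :=
          subset_closure ⟨u, rfl, fun a => B * f a * B⁻¹, st18_lift_conj f B u⟩
        have e : B * A⁻¹ * B⁻¹ = (B * A * B⁻¹)⁻¹ := by group
        rw [e]; exact inv_mem this
      have hcomm : ⁅B' * B⁻¹, B * A⁻¹ * B⁻¹⁆ ∈ ⁅verbal {u} G, KVstar {w} K⁆ := by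
        rw [Subgroup.commutator_comm]
        exact Subgroup.commutator_mem_commutator ht hAmem
      exact (le_sup_right : ⁅verbal {u} G, KVstar {w} K⁆ ≤ _)
        (Subgroup.commutator_normal _ _ |>.conj_mem _ hcomm A)
  · -- ≥ direction
    apply sup_le
    · -- ⁅[K u* G], w(G)⁆ ≤ [K v* G]
      apply st18_commutator_closure_le
      rintro x ⟨u', hu', f, a, r, hr, rfl⟩ y ⟨w', hw', h, rfl⟩
      rw [Set.mem_singleton_iff] at hu' hw'
      subst hu'; subst hw'
      set A := FreeGroup.lift f u' with hA
      set A' := FreeGroup.lift (Function.update f a (f a * r)) u' with hA'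
      set B := FreeGroup.lift h w' with hB
      set F : α ⊕ β → G := Sum.elim f (fun b => A⁻¹ * h b * A⁻¹⁻¹) with hF
      have hE : FreeGroup.lift (Function.update F (Sum.inl a) (F (Sum.inl a) * r)) v
          * (FreeGroup.lift F v)⁻¹ ∈ KVstar {v} K :=
        subset_closure ⟨v, rfl, F, Sum.inl a, r, hr, rfl⟩
      have h1 : Function.update F (Sum.inl a) (F (Sum.inl a) * r) ∘ Sum.inl
          = Function.update f a (f a * r) := by
        rw [Function.update_comp_eq_of_injective _ Sum.inl_injective]
        rfl
      have h2 : Function.update F (Sum.inl a) (F (Sum.inl a) * r) ∘ Sum.inr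
          = fun b => A⁻¹ * h b * A⁻¹⁻¹ :=
        Function.update_comp_eq_of_forall_ne _ _ (fun x => Sum.inr_ne_inl)
      have h3 : F ∘ Sum.inl = f := rfl
      have h4 : F ∘ Sum.inr = fun b => A⁻¹ * h b * A⁻¹⁻¹ := rfl
      have hEval : FreeGroup.lift (Function.update F (Sum.inl a) (F (Sum.inl a) * r)) v
          * (FreeGroup.lift F v)⁻¹ = ⁅A' * A⁻¹, B⁆ := by
        rw [evalv, evalv, h1, h2, h3, h4, st18_lift_conj h A⁻¹ w', ← hA, ← hA', ← hB]
        simp only [commutatorElement_def]; group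
      rw [hEval] at hE
      exact hE
    · -- ⁅u(G), [K w* G]⁆ ≤ [K v* G]
      apply st18_commutator_closure_le
      rintro x ⟨u', hu', f, rfl⟩ y ⟨w', hw', h, b, r, hr, rfl⟩
      rw [Set.mem_singleton_iff] at hu' hw'
      subst hu'; subst hw'
      set c := FreeGroup.lift f u' with hc
      set B := FreeGroup.lift h w' with hB
      set B' := FreeGroup.lift (Function.update h b (h b * r)) w' with hB'
      set F : α ⊕ β → G := Sum.elim (fun a => B⁻¹ * f a * B⁻¹⁻¹) h with hF
      have hE : FreeGroup.lift (Function.update F (Sum.inr b) (F (Sum.inr b) * r)) v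
          * (FreeGroup.lift F v)⁻¹ ∈ KVstar {v} K :=
        subset_closure ⟨v, rfl, F, Sum.inr b, r, hr, rfl⟩
      have h1 : Function.update F (Sum.inr b) (F (Sum.inr b) * r) ∘ Sum.inl
          = fun a => B⁻¹ * f a * B⁻¹⁻¹ :=
        Function.update_comp_eq_of_forall_ne _ _ (fun x => Sum.inl_ne_inr)
      have h2 : Function.update F (Sum.inr b) (F (Sum.inr b) * r) ∘ Sum.inr
          = Function.update h b (h b * r) := by
        rw [Function.update_comp_eq_of_injective _ Sum.inr_injective]
        rfl
      have h3 : F ∘ Sum.inl = fun a => B⁻¹ * f a * B⁻¹⁻¹ := rfl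
      have h4 : F ∘ Sum.inr = h := rfl
      have hEval : FreeGroup.lift (Function.update F (Sum.inr b) (F (Sum.inr b) * r)) v
          * (FreeGroup.lift F v)⁻¹
          = (B⁻¹ * c * B) * ⁅B' * B⁻¹, c⁻¹⁆ * (B⁻¹ * c * B)⁻¹ := by
        rw [evalv, evalv, h1, h2, h3, h4, st18_lift_conj f B⁻¹ u', ← hc, ← hB, ← hB']
        simp only [commutatorElement_def]; group
      rw [hEval] at hE
      have h5 : ⁅B' * B⁻¹, c⁻¹⁆ ∈ KVstar {v} K := by
        have e : ⁅B' * B⁻¹, c⁻¹⁆ = (B⁻¹ * c * B)⁻¹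
            * ((B⁻¹ * c * B) * ⁅B' * B⁻¹, c⁻¹⁆ * (B⁻¹ * c * B)⁻¹) * ((B⁻¹ * c * B)⁻¹)⁻¹ := by
          group
        rw [e]; exact hL.conj_mem _ hE _
      have e2 : ⁅c, B' * B⁻¹⁆ = c * ⁅B' * B⁻¹, c⁻¹⁆ * c⁻¹ := by
        simp only [commutatorElement_def]; group
      rw [e2]
      exact hL.conj_mem _ h5 c


end PaperFormal
end
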